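/- For a random k-CNF formula with n variables and m = rn clauses chosen uniformly and independently, the expected number of ordered pairs of satisfying assignments at Hamming distance z = αn is at most Λ(α,k,r)^n, where Λ(α,k,r) = 2(1 - 2^{1-k} + 2^{-k}(1-α)^k)^r / (α^α (1-α)^{1-α}). -/

import Mathlib

open Real

/-- `Λ(α,k,r) = 2 (1 - 2^{1-k} + 2^{-k}(1-α)^k)^r / (α^α (1-α)^{1-α})`. -/
noncomputable def Lam (α : ℝ) (k : ℕ) (r : ℝ) : ℝ :=
  2 * (1 - 2 ^ (1 - (k : ℝ)) + 2 ^ (-(k : ℝ)) * (1 - α) ^ k) ^ r /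
    (α ^ α * (1 - α) ^ (1 - α))

/-- A `k`-clause over `n` variables: an injective tuple of `k` variables together
with signs for each. -/
abbrev ClauseT (n k : ℕ) :=
  {p : (Fin k → Fin n) × (Fin k → Bool) // Function.Injective p.1}

/-- A random formula is a tuple of `m` clauses; `SatF σ F` means `σ` satisfies
every clause of `F`. -/
def SatF {n k m : ℕ} (σ : Fin n → Bool) (F : Fin m → ClauseT n k) : Prop :=
  ∀ j : Fin m, ∃ i : Fin k, σ ((F j).1.1 i) = (F j).1.2 i

instance {n k m : ℕ} (σ : Fin n → Bool) (F : Fin m → ClauseT n k) :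
    Decidable (SatF σ F) := by unfold SatF; infer_instance

/-- The number of ordered pairs of satisfying assignments of `F` at Hamming
distance `z`. -/
def pairCount {n k m : ℕ} (F : Fin m → ClauseT n k) (z : ℕ) : ℕ :=
  (Finset.univ.filter
    (fun p : (Fin n → Bool) × (Fin n → Bool) =>
      SatF p.1 F ∧ SatF p.2 F ∧ hammingDist p.1 p.2 = z)).card

section Aux

lemma descFactorial_mul_pow_le (a n k : ℕ) (h : a ≤ n) :
    a.descFactorial k * n ^ k ≤ a ^ k * n.descFactorial k := by
  induction k with
  | zero => simp
  | succ k ih =>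
    have h1 : (a - k) * n ≤ a * (n - k) := by
      rw [Nat.sub_mul, Nat.mul_sub]
      apply Nat.sub_le_sub_left
      calc a * k = k * a := Nat.mul_comm _ _
        _ ≤ k * n := Nat.mul_le_mul_left _ h
    have h2 := Nat.mul_le_mul h1 ih
    rw [Nat.descFactorial_succ, Nat.descFactorial_succ, pow_succ, pow_succ]
    calc (a - k) * a.descFactorial k * (n ^ k * n)
        = (a - k) * n * (a.descFactorial k * n ^ k) := by ring
      _ ≤ a * (n - k) * (a ^ k * n.descFactorial k) := h2
      _ = a ^ k * a * ((n - k) * n.descFactorial k) := by ring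

lemma choose_mul_le_one (n z : ℕ) (x : ℝ) (hzn : z ≤ n) (h0 : 0 ≤ x) (h1 : x ≤ 1) :
    (n.choose z : ℝ) * (x ^ z * (1 - x) ^ (n - z)) ≤ 1 := by
  have key := (add_pow x (1 - x) n).symm
  have h2 : (0:ℝ) ≤ 1 - x := by linarith
  calc (n.choose z : ℝ) * (x ^ z * (1 - x) ^ (n - z))
      = x ^ z * (1 - x) ^ (n - z) * (n.choose z : ℝ) := by ring
    _ ≤ ∑ i ∈ Finset.range (n+1), x ^ i * (1 - x) ^ (n - i) * (n.choose i : ℝ) := by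
        refine Finset.single_le_sum
          (f := fun i => x ^ i * (1 - x) ^ (n - i) * (n.choose i : ℝ))
          (fun i _ => by positivity) ?_
        simp [Nat.lt_succ_iff, hzn]
    _ = (x + (1 - x)) ^ n := key
    _ = 1 := by norm_num

lemma card_dist_pairs (n z : ℕ) :
    (Finset.univ.filter
      (fun p : (Fin n → Bool) × (Fin n → Bool) => hammingDist p.1 p.2 = z)).card
      = 2 ^ n * n.choose z := by
  have : (2 ^ n * n.choose z)
      = ((Finset.univ : Finset (Fin n → Bool)) ×ˢ Finset.powersetCard z (Finset.univ : Finset (Fin n))).card := by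
    rw [Finset.card_product, Finset.card_univ, Finset.card_powersetCard]
    simp
  rw [this]
  apply Finset.card_bij'
    (i := fun (p : (Fin n → Bool) × (Fin n → Bool)) _ =>
      ((p.1, Finset.univ.filter fun i => p.1 i ≠ p.2 i) : (Fin n → Bool) × Finset (Fin n)))
    (j := fun (q : (Fin n → Bool) × Finset (Fin n)) _ =>
      ((q.1, fun i => if i ∈ q.2 then !q.1 i else q.1 i) : (Fin n → Bool) × (Fin n → Bool)))
  case hi =>
    intro p hp
    simp only [Finset.mem_filter, Finset.mem_univ, true_and] at hp
    simp only [Finset.mem_product, Finset.mem_univ, true_and, Finset.mem_powersetCard_univ]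
    exact hp
  case hj =>
    intro q hq
    simp only [Finset.mem_product, Finset.mem_univ, true_and, Finset.mem_powersetCard_univ] at hq
    simp only [Finset.mem_filter, Finset.mem_univ, true_and]
    show (Finset.univ.filter fun i => q.1 i ≠ if i ∈ q.2 then !q.1 i else q.1 i).card = z
    rw [← hq]
    congr 1
    ext i
    by_cases h : i ∈ q.2 <;> simp [h]
  case left_inv =>
    intro p hp
    apply Prod.ext
    · rfl
    · funext i
      by_cases h : p.1 i = p.2 i
      · simp [h]
      · simp only [h, ne_eq, not_false_iff, Finset.mem_filter, Finset.mem_univ, true_and, if_true]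
        cases hx : p.1 i <;> cases hy : p.2 i <;> simp_all
  case right_inv =>
    intro q hq
    apply Prod.ext
    · rfl
    · show (Finset.univ.filter fun i => q.1 i ≠ if i ∈ q.2 then !q.1 i else q.1 i) = q.2
      ext i
      by_cases h : i ∈ q.2 <;> simp [h]

lemma card_ClauseT (n k : ℕ) :
    Fintype.card (ClauseT n k) = n.descFactorial k * 2 ^ k := by
  have e : ClauseT n k ≃ ({f : Fin k → Fin n // Function.Injective f} × (Fin k → Bool)) :=
    { toFun := fun c => (⟨c.1.1, c.2⟩, c.1.2)
      invFun := fun p => ⟨(p.1.1, p.2), p.1.2⟩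
      left_inv := fun c => rfl
      right_inv := fun p => rfl }
  rw [Fintype.card_congr e, Fintype.card_prod,
    Fintype.card_congr (Equiv.subtypeInjectiveEquivEmbedding (Fin k) (Fin n)),
    Fintype.card_embedding_eq]
  simp

lemma card_bad (n k : ℕ) (σ : Fin n → Bool) :
    (Finset.univ.filter fun c : ClauseT n k => ∀ i, σ (c.1.1 i) ≠ c.1.2 i).card
      = n.descFactorial k := by
  have : n.descFactorial k = (Finset.univ : Finset (Fin k ↪ Fin n)).card := by
    rw [Finset.card_univ, Fintype.card_embedding_eq]; simp
  rw [this]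
  apply Finset.card_bij'
    (i := fun (c : ClauseT n k) _ => (⟨c.1.1, c.2⟩ : Fin k ↪ Fin n))
    (j := fun (e : Fin k ↪ Fin n) _ =>
      (⟨(e, fun i => !σ (e i)), e.injective⟩ : ClauseT n k))
  case hi => intro c hc; exact Finset.mem_univ _
  case hj =>
    intro e he
    simp only [Finset.mem_filter, Finset.mem_univ, true_and]
    intro i
    simp
  case left_inv =>
    intro c hc
    simp only [Finset.mem_filter, Finset.mem_univ, true_and] at hc
    apply Subtype.ext
    apply Prod.ext
    · rfl
    · funext i
      have := hc i
      cases h1 : σ (c.1.1 i) <;> cases h2 : c.1.2 i <;> simp_all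
  case right_inv => intro e he; rfl

lemma card_bad2 (n k z : ℕ) (σ τ : Fin n → Bool) (hd : hammingDist σ τ = z) :
    (Finset.univ.filter fun c : ClauseT n k =>
        (∀ i, σ (c.1.1 i) ≠ c.1.2 i) ∧ (∀ i, τ (c.1.1 i) ≠ c.1.2 i)).card
      = (n - z).descFactorial k := by
  have hcard : Fintype.card {x : Fin n // σ x = τ x} = n - z := by
    have h1 : Fintype.card {x : Fin n // σ x = τ x}
        = Fintype.card {x : Fin n // ¬ (σ x ≠ τ x)} :=
      Fintype.card_congr (Equiv.subtypeEquivRight (fun x => by simp))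
    rw [h1, Fintype.card_subtype_compl]
    congr 1
    · exact Fintype.card_fin n
    · rw [Fintype.card_subtype]
      exact hd.symm ▸ rfl
  have : (n - z).descFactorial k
      = (Finset.univ : Finset (Fin k ↪ {x : Fin n // σ x = τ x})).card := by
    rw [Finset.card_univ, Fintype.card_embedding_eq, hcard]; simp
  rw [this]
  apply Finset.card_bij'
    (i := fun (c : ClauseT n k) hc =>
      (⟨fun j => ⟨c.1.1 j, by
          simp only [Finset.mem_filter, Finset.mem_univ, true_and] at hc
          have h1 := hc.1 j; have h2 := hc.2 j
          cases hσ : σ (c.1.1 j) <;> cases hτ : τ (c.1.1 j) <;>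
            cases hb : c.1.2 j <;> simp_all⟩,
        fun a b hab => c.2 (congrArg Subtype.val hab)⟩ :
        Fin k ↪ {x : Fin n // σ x = τ x}))
    (j := fun (e : Fin k ↪ {x : Fin n // σ x = τ x}) _ =>
      (⟨(fun j => (e j).1, fun j => !σ (e j).1),
        fun a b hab => e.injective (Subtype.ext hab)⟩ : ClauseT n k))
  case hi => intro c hc; exact Finset.mem_univ _
  case hj =>
    intro e he
    simp only [Finset.mem_filter, Finset.mem_univ, true_and]
    constructor
    · intro i
      show σ (e i).1 ≠ !σ (e i).1
      simp
    · intro i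
      show τ (e i).1 ≠ !σ (e i).1
      have := (e i).2
      simp [← this]
  case left_inv =>
    intro c hc
    simp only [Finset.mem_filter, Finset.mem_univ, true_and] at hc
    apply Subtype.ext
    apply Prod.ext
    · rfl
    · funext i
      have := hc.1 i
      cases h1 : σ (c.1.1 i) <;> cases h2 : c.1.2 i <;> simp_all <;> exact h1
  case right_inv =>
    intro e he
    apply DFunLike.ext
    intro j
    rfl

end Aux

theorem expected_pairs_le (n k m z : ℕ) (hn : 0 < n) (hk : 1 ≤ k) (hkn : k ≤ n)
    (hz0 : 0 < z) (hzn : z < n) :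
    (∑ F : Fin m → ClauseT n k, (pairCount F z : ℝ)) /
        (Fintype.card (Fin m → ClauseT n k) : ℝ) ≤
      Lam ((z : ℝ) / n) k ((m : ℝ) / n) ^ n := by
  classical
  set α : ℝ := (z : ℝ) / n with hα_def
  set r : ℝ := (m : ℝ) / n with hr_def
  set q : ℝ := 1 - 2 ^ (1 - (k : ℝ)) + 2 ^ (-(k : ℝ)) * (1 - α) ^ k with hq_def
  have hn' : (0:ℝ) < n := by positivity
  have hα0 : 0 < α := by positivity
  have hα1 : α < 1 := by
    rw [hα_def, div_lt_one hn']
    exact_mod_cast hzn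
  have h1α : (0:ℝ) < 1 - α := by linarith
  -- basic cardinalities
  set N : ℕ := Fintype.card (ClauseT n k) with hN_def
  have hNcard : N = n.descFactorial k * 2 ^ k := card_ClauseT n k
  have hN0 : 0 < N := by
    rw [hNcard]
    have h1 : 0 < n.descFactorial k := Nat.pos_of_ne_zero
      (fun h0 => absurd (Nat.descFactorial_eq_zero_iff_lt.mp h0) (not_lt.mpr hkn))
    positivity
  have hcardfun : Fintype.card (Fin m → ClauseT n k) = N ^ m := by
    rw [Fintype.card_fun, Fintype.card_fin]
  -- good clause count for a pair
  set G : (Fin n → Bool) × (Fin n → Bool) → ℕ := fun p =>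
    (Finset.univ.filter fun c : ClauseT n k =>
      (∃ i, p.1 (c.1.1 i) = c.1.2 i) ∧ (∃ i, p.2 (c.1.1 i) = c.1.2 i)).card with hG_def
  set Pz : Finset ((Fin n → Bool) × (Fin n → Bool)) :=
    Finset.univ.filter (fun p => hammingDist p.1 p.2 = z) with hPz_def
  -- Step 1: sum swap
  have hswap : (∑ F : Fin m → ClauseT n k, pairCount F z) = ∑ p ∈ Pz, G p ^ m := by
    have h1 : ∀ F : Fin m → ClauseT n k, pairCount F z
        = ∑ p : (Fin n → Bool) × (Fin n → Bool),
            if SatF p.1 F ∧ SatF p.2 F ∧ hammingDist p.1 p.2 = z then 1 else 0 := by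
      intro F
      rw [pairCount, Finset.card_filter]
    calc (∑ F : Fin m → ClauseT n k, pairCount F z)
        = ∑ F : Fin m → ClauseT n k, ∑ p : (Fin n → Bool) × (Fin n → Bool),
            if SatF p.1 F ∧ SatF p.2 F ∧ hammingDist p.1 p.2 = z then 1 else 0 := by
          exact Finset.sum_congr rfl (fun F _ => h1 F)
      _ = ∑ p : (Fin n → Bool) × (Fin n → Bool), ∑ F : Fin m → ClauseT n k,
            if SatF p.1 F ∧ SatF p.2 F ∧ hammingDist p.1 p.2 = z then 1 else 0 :=
          Finset.sum_comm
      _ = ∑ p : (Fin n → Bool) × (Fin n → Bool),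
            if hammingDist p.1 p.2 = z then G p ^ m else 0 := by
          apply Finset.sum_congr rfl
          intro p _
          by_cases hC : hammingDist p.1 p.2 = z
          · simp only [hC, if_true, and_true]
            have hfilter : (Finset.univ.filter fun F : Fin m → ClauseT n k =>
                SatF p.1 F ∧ SatF p.2 F)
                = Fintype.piFinset (fun _ : Fin m =>
                    Finset.univ.filter fun c : ClauseT n k =>
                      (∃ i, p.1 (c.1.1 i) = c.1.2 i) ∧ (∃ i, p.2 (c.1.1 i) = c.1.2 i)) := by
              ext F
              simp only [Finset.mem_filter, Finset.mem_univ, true_and,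
                Fintype.mem_piFinset, SatF, ← forall_and]
            rw [← Finset.card_filter, hfilter, Fintype.card_piFinset]
            simp [hG_def]
          · simp [hC]
      _ = ∑ p ∈ Pz, G p ^ m := (Finset.sum_filter _ _).symm
  -- Step 2: per-pair bound
  have hGbound : ∀ p ∈ Pz, (G p : ℝ) ≤ q * N := by
    intro p hp
    simp only [hPz_def, Finset.mem_filter, Finset.mem_univ, true_and] at hp
    set A : Finset (ClauseT n k) :=
      Finset.univ.filter fun c : ClauseT n k => ∀ i, p.1 (c.1.1 i) ≠ c.1.2 i with hA_def
    set B : Finset (ClauseT n k) :=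
      Finset.univ.filter fun c : ClauseT n k => ∀ i, p.2 (c.1.1 i) ≠ c.1.2 i with hB_def
    have hgood_eq : (Finset.univ.filter fun c : ClauseT n k =>
        (∃ i, p.1 (c.1.1 i) = c.1.2 i) ∧ (∃ i, p.2 (c.1.1 i) = c.1.2 i))
        = Finset.univ \ (A ∪ B) := by
      ext c
      simp only [Finset.mem_filter, Finset.mem_univ, true_and, Finset.mem_sdiff,
        Finset.mem_union, not_or, hA_def, hB_def, not_forall, not_not, ne_eq]
    have hAB_inter : A ∩ B = Finset.univ.filter fun c : ClauseT n k =>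
        (∀ i, p.1 (c.1.1 i) ≠ c.1.2 i) ∧ (∀ i, p.2 (c.1.1 i) ≠ c.1.2 i) := by
      rw [Finset.filter_and]
    have hA_card : A.card = n.descFactorial k := card_bad n k p.1
    have hB_card : B.card = n.descFactorial k := card_bad n k p.2
    have hI_card : (A ∩ B).card = (n - z).descFactorial k := by
      rw [hAB_inter]; exact card_bad2 n k z p.1 p.2 hp
    have hG_eq : G p + (A ∪ B).card = N := by
      rw [hG_def]
      simp only
      rw [hgood_eq, Finset.card_sdiff_of_subset (Finset.subset_univ _)]
      have h2 := Finset.card_le_univ (A ∪ B)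
      simp only [Finset.card_univ] at h2 ⊢
      omega
    have hunion : (A ∪ B).card + (A ∩ B).card = A.card + B.card :=
      Finset.card_union_add_card_inter A B
    -- real arithmetic
    have hGr : (G p : ℝ) = (N : ℝ) - 2 * (n.descFactorial k : ℝ)
        + ((n - z).descFactorial k : ℝ) := by
      have e1 : (G p : ℝ) + ((A ∪ B).card : ℝ) = N := by exact_mod_cast hG_eq
      have e2 : ((A ∪ B).card : ℝ) = 2 * (n.descFactorial k : ℝ)
          - ((n - z).descFactorial k : ℝ) := by
        rw [hA_card, hB_card, hI_card] at hunion
        have e3 : ((A ∪ B).card : ℝ) + ((n - z).descFactorial k : ℝ)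
            = (n.descFactorial k : ℝ) + (n.descFactorial k : ℝ) := by exact_mod_cast hunion
        linarith
      linarith
    -- bound on descFactorial ratio
    have hdesc : ((n - z).descFactorial k : ℝ)
        ≤ (1 - α) ^ k * (n.descFactorial k : ℝ) := by
      have hnat := descFactorial_mul_pow_le (n - z) n k (Nat.sub_le n z)
      have hcast : ((n - z).descFactorial k : ℝ) * (n : ℝ) ^ k
          ≤ ((n - z : ℕ) : ℝ) ^ k * (n.descFactorial k : ℝ) := by exact_mod_cast hnat
      have h1α_eq : 1 - α = ((n - z : ℕ) : ℝ) / n := by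
        rw [Nat.cast_sub hzn.le, hα_def]
        field_simp
      rw [h1α_eq, div_pow, div_mul_eq_mul_div, le_div_iff₀ (by positivity)]
      linarith [hcast]
    -- rpow computations
    have h2k : (2:ℝ) ^ (-(k:ℝ)) = ((2:ℝ) ^ k)⁻¹ := by
      rw [Real.rpow_neg (by norm_num), Real.rpow_natCast]
    have h2k1 : (2:ℝ) ^ (1 - (k:ℝ)) = 2 * ((2:ℝ) ^ k)⁻¹ := by
      rw [sub_eq_add_neg, Real.rpow_add (by norm_num), Real.rpow_one, h2k]
    have hqN : q * N = (N : ℝ) - 2 * (n.descFactorial k : ℝ)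
        + (1 - α) ^ k * (n.descFactorial k : ℝ) := by
      have hNr : (N : ℝ) = (n.descFactorial k : ℝ) * (2:ℝ) ^ k := by
        rw [hNcard]; push_cast; ring
      rw [hq_def, hNr, h2k, h2k1]
      have h2kpos : (0:ℝ) < (2:ℝ) ^ k := by positivity
      field_simp
    rw [hGr, hqN]
    linarith [hdesc]
  -- nonnegativity of q
  have hq0 : 0 ≤ q := by
    have h1 : (2:ℝ) ^ (1 - (k:ℝ)) ≤ 1 := by
      apply Real.rpow_le_one_of_one_le_of_nonpos (by norm_num)
      have : (1:ℝ) ≤ (k:ℝ) := by exact_mod_cast hk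
      linarith
    have h2 : (0:ℝ) ≤ 2 ^ (-(k:ℝ)) * (1 - α) ^ k := by positivity
    rw [hq_def]; linarith
  -- Step 3: sum over pairs
  have hPzcard : Pz.card = 2 ^ n * n.choose z := card_dist_pairs n z
  have hsum_bound : (∑ F : Fin m → ClauseT n k, (pairCount F z : ℝ))
      ≤ (2:ℝ) ^ n * (n.choose z : ℝ) * (q * N) ^ m := by
    have : (∑ F : Fin m → ClauseT n k, (pairCount F z : ℝ)) = ∑ p ∈ Pz, (G p : ℝ) ^ m := by
      rw [← Nat.cast_sum, hswap]
      push_cast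
      rfl
    rw [this]
    calc (∑ p ∈ Pz, (G p : ℝ) ^ m) ≤ ∑ p ∈ Pz, (q * N) ^ m := by
          apply Finset.sum_le_sum
          intro p hp
          exact pow_le_pow_left₀ (by positivity) (hGbound p hp) m
      _ = Pz.card * (q * N) ^ m := by rw [Finset.sum_const, nsmul_eq_mul]
      _ = (2:ℝ) ^ n * (n.choose z : ℝ) * (q * N) ^ m := by
          rw [hPzcard]; push_cast; ring
  -- entropy bound
  set D : ℝ := α ^ α * (1 - α) ^ (1 - α) with hD_def
  have hD0 : 0 < D := by
    rw [hD_def]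
    exact mul_pos (Real.rpow_pos_of_pos hα0 _) (Real.rpow_pos_of_pos h1α _)
  have hDn : D ^ n = α ^ z * (1 - α) ^ (n - z) := by
    rw [hD_def, mul_pow]
    congr 1
    · rw [← Real.rpow_natCast (α ^ α) n, ← Real.rpow_mul hα0.le]
      have : α * n = (z : ℝ) := by rw [hα_def]; field_simp
      rw [this, Real.rpow_natCast]
    · rw [← Real.rpow_natCast ((1 - α) ^ (1 - α)) n, ← Real.rpow_mul h1α.le]
      have : (1 - α) * n = ((n - z : ℕ) : ℝ) := by
        rw [Nat.cast_sub hzn.le, hα_def]; field_simp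
      rw [this, Real.rpow_natCast]
  have hDnpos : (0:ℝ) < D ^ n := pow_pos hD0 n
  have hchoose : (n.choose z : ℝ) ≤ (D ^ n)⁻¹ := by
    have h := choose_mul_le_one n z α hzn.le hα0.le hα1.le
    rw [← one_div]
    rw [le_div_iff₀ hDnpos, hDn]
    linarith
  -- rpow identity
  have hqm : (q ^ r) ^ n = q ^ m := by
    rw [← Real.rpow_natCast (q ^ r) n, ← Real.rpow_mul hq0]
    have hrn : r * (n : ℝ) = (m : ℝ) := by rw [hr_def]; field_simp
    rw [hrn, Real.rpow_natCast]
  have hLam : Lam α k r ^ n = (2:ℝ) ^ n * q ^ m / D ^ n := by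
    rw [show Lam α k r = 2 * q ^ r / D from rfl, div_pow, mul_pow, hqm]
  -- final assembly
  rw [hcardfun, div_le_iff₀ (by positivity : (0:ℝ) < ((N ^ m : ℕ) : ℝ))]
  have hNm : ((N ^ m : ℕ) : ℝ) = (N : ℝ) ^ m := by push_cast; rfl
  rw [hNm]
  calc (∑ F : Fin m → ClauseT n k, (pairCount F z : ℝ))
      ≤ (2:ℝ) ^ n * (n.choose z : ℝ) * (q * N) ^ m := hsum_bound
    _ = (2:ℝ) ^ n * (n.choose z : ℝ) * (q ^ m * (N:ℝ) ^ m) := by rw [mul_pow]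
    _ ≤ (2:ℝ) ^ n * (D ^ n)⁻¹ * (q ^ m * (N:ℝ) ^ m) := by
        have hfac : (0:ℝ) ≤ q ^ m * (N:ℝ) ^ m := by positivity
        have h2n : (0:ℝ) ≤ (2:ℝ) ^ n := by positivity
        apply mul_le_mul_of_nonneg_right _ hfac
        exact mul_le_mul_of_nonneg_left hchoose h2n
    _ = Lam α k r ^ n * (N:ℝ) ^ m := by rw [hLam]; field_simp
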